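/- Let d ≥ 1, let f : ℝ^d → ℝ be continuously differentiable, and let x₀ ∈ ℝ^d. Define the Integrated Gradients attribution A ∈ ℝ^d by A_i = x₀_i · ∫_0^1 (∇f(α·x₀))_i dα. Then A is the unique minimizer over w ∈ ℝ^d of the gradient-matching objective L(w) = ∫_0^1 ‖ (x₀ ⊙ ∇f(α·x₀)) − w ‖² dα, where (x₀ ⊙ v)_i = x₀_i · v_i denotes the componentwise product. (Local function approximation with multiplicative continuous perturbations ξ·x₀, ξ ∼ Uniform(0,1), and gradient-matching loss is equivalent to Integrated Gradients.) -/

import Mathlib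

open MeasureTheory

theorem integrated_gradients_lfa
    (d : ℕ) (hd : 1 ≤ d)
    (f : EuclideanSpace ℝ (Fin d) → ℝ) (hf : ContDiff ℝ 1 f)
    (x₀ : EuclideanSpace ℝ (Fin d)) :
    let A : EuclideanSpace ℝ (Fin d) :=
      WithLp.toLp 2 (fun i => x₀ i * ∫ α in (0:ℝ)..1, gradient f (α • x₀) i)
    let L : EuclideanSpace ℝ (Fin d) → ℝ := fun w =>
      ∫ α in (0:ℝ)..1,
        ‖(show EuclideanSpace ℝ (Fin d) from WithLp.toLp 2 (fun i => x₀ i * gradient f (α • x₀) i)) - w‖ ^ 2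
    (∀ w, L A ≤ L w) ∧ (∀ w, L w = L A → w = A) := by
  intro A L
  have hgradc : Continuous (gradient f) := by
    have h1 : Continuous (fderiv ℝ f) := hf.continuous_fderiv one_ne_zero
    have h2 : gradient f = fun x => (InnerProductSpace.toDual ℝ (EuclideanSpace ℝ (Fin d))).symm (fderiv ℝ f x) := rfl
    rw [h2]
    exact (InnerProductSpace.toDual ℝ _).symm.continuous.comp h1
  set G : ℝ → EuclideanSpace ℝ (Fin d) := fun α =>
    (show EuclideanSpace ℝ (Fin d) from WithLp.toLp 2 (fun i => x₀ i * gradient f (α • x₀) i)) with hGdef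
  have hGcont : Continuous G := by
    apply (PiLp.continuous_toLp 2 _).comp
    apply continuous_pi
    intro i
    exact (continuous_const.mul (((continuous_apply i).comp ((PiLp.continuous_ofLp 2 _).comp hgradc)).comp
      (continuous_id.smul continuous_const)))
  have hGint : IntervalIntegrable G volume 0 1 := hGcont.intervalIntegrable _ _
  have hA : A = ∫ α in (0:ℝ)..1, G α := by
    ext i
    have := ((EuclideanSpace.proj i : EuclideanSpace ℝ (Fin d) →L[ℝ] ℝ).intervalIntegral_comp_comm hGint)
    have hproj : (∫ α in (0:ℝ)..1, G α) i = ∫ α in (0:ℝ)..1, G α i := this.symm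
    rw [hproj]
    simp only [hGdef]
    rw [intervalIntegral.integral_const_mul]
  have key : ∀ w, L w = L A + ‖A - w‖ ^ 2 := by
    intro w
    have hGA : Continuous (fun α => G α - A) := hGcont.sub continuous_const
    have hint0 : (∫ α in (0:ℝ)..1, (G α - A)) = 0 := by
      rw [intervalIntegral.integral_sub hGint intervalIntegrable_const,
        intervalIntegral.integral_const, ← hA]
      simp
    have h1 : IntervalIntegrable (fun α => ‖G α - A‖ ^ 2) volume 0 1 :=
      ((hGA.norm.pow 2)).intervalIntegrable _ _
    have h2 : IntervalIntegrable (fun α => 2 * (inner ℝ (G α - A) (A - w) : ℝ)) volume 0 1 := by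
      apply Continuous.intervalIntegrable
      exact continuous_const.mul (hGA.inner continuous_const)
    have h3 : IntervalIntegrable (fun _ : ℝ => ‖A - w‖ ^ 2) volume 0 1 :=
      intervalIntegrable_const
    have hexp : ∀ α : ℝ, ‖G α - w‖ ^ 2
        = ‖G α - A‖ ^ 2 + 2 * (inner ℝ (G α - A) (A - w) : ℝ) + ‖A - w‖ ^ 2 := by
      intro α
      have : G α - w = (G α - A) + (A - w) := by abel
      rw [this, @norm_add_sq_real]
    have hLw : L w = ∫ α in (0:ℝ)..1,
        (‖G α - A‖ ^ 2 + 2 * (inner ℝ (G α - A) (A - w) : ℝ) + ‖A - w‖ ^ 2) := by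
      simp only [L]
      exact intervalIntegral.integral_congr (fun α _ => hexp α)
    rw [hLw, intervalIntegral.integral_add (h1.add h2) h3,
      intervalIntegral.integral_add h1 h2]
    have hmid : (∫ α in (0:ℝ)..1, 2 * (inner ℝ (G α - A) (A - w) : ℝ)) = 0 := by
      rw [intervalIntegral.integral_const_mul]
      have h4 : (fun α : ℝ => (inner ℝ (G α - A) (A - w) : ℝ))
          = fun α : ℝ => (innerSL ℝ (A - w)) (G α - A) := by
        funext α
        rw [innerSL_apply_apply, real_inner_comm]
      have h5 := (innerSL ℝ (A - w)).intervalIntegral_comp_comm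
        ((hGA.intervalIntegrable 0 1 : IntervalIntegrable (fun α => G α - A) volume 0 1))
      rw [h4, h5, hint0]
      simp
    have hLA : L A = ∫ α in (0:ℝ)..1, ‖G α - A‖ ^ 2 := rfl
    rw [hmid, hLA, intervalIntegral.integral_const]
    ring_nf
  constructor
  · intro w
    rw [key w]
    nlinarith [sq_nonneg ‖A - w‖]
  · intro w hw
    rw [key w] at hw
    have : ‖A - w‖ ^ 2 = 0 := by linarith
    have : A - w = 0 := by
      simpa using (pow_eq_zero_iff (n := 2) (by norm_num)).mp this
    have := sub_eq_zero.mp this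
    exact this.symm
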